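/- Let C be a small category and F : Cᵒᵖ ⥤ Type a presheaf of sets on C. Then there exists a regular cardinal κ such that F is a κ-presentable object of the presheaf category Fun(Cᵒᵖ, Type): the functor Hom(F, −) from presheaves to sets preserves colimits of κ-filtered diagrams. -/

import Mathlib

/-!
STATEMENT 14: every presheaf of sets on a small category is a presentable object of the
presheaf category: there is a regular cardinal `κ` such that `Hom(F, −)` preserves colimits
of `κ`-filtered diagrams.
-/

open CategoryTheory CategoryTheory.Limits

universe v u

section

/-- `K` is `κ`-filtered: every diagram in `K` indexed by a small category with fewer than `κ`
morphisms admits a cocone. -/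
def IsCardFiltered (κ : Cardinal.{v}) (K : Type v) [SmallCategory K] : Prop :=
  ∀ (D : Type v) [SmallCategory D], Cardinal.mk (Arrow D) < κ →
    ∀ G : D ⥤ K, Nonempty (Cocone G)

variable {A : Type u} [Category.{v} A]

/-- `z` is `κ`-presentable: `Hom_A(z, −)` preserves colimits of `κ`-filtered diagrams. -/
def IsCardPresentable (κ : Cardinal.{v}) (z : A) : Prop :=
  ∀ (K : Type v) [SmallCategory K], IsCardFiltered κ K →
    PreservesColimitsOfShape K (coyoneda.obj (Opposite.op z))


namespace Stmt14Aux


lemma card_arrow_discrete (J : Type u) :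
    Cardinal.mk (Arrow (Discrete J)) ≤ Cardinal.mk J := by
  apply Cardinal.mk_le_of_surjective (f := fun j : J => Arrow.mk (𝟙 (Discrete.mk j)))
  rintro ⟨⟨a⟩, ⟨b⟩, u⟩
  obtain rfl : a = b := u.down.down
  refine ⟨a, ?_⟩
  have : u = 𝟙 (Discrete.mk a) := Subsingleton.elim _ _
  subst this
  rfl

lemma card_arrow_wpf (J : Type u) :
    Cardinal.mk (Arrow (WalkingParallelFamily J)) ≤ Cardinal.mk (Option (Option J)) := by
  apply Cardinal.mk_le_of_surjective
    (f := fun o : Option (Option J) => o.elim (Arrow.mk (𝟙 WalkingParallelFamily.zero))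
      (fun o' => o'.elim (Arrow.mk (𝟙 WalkingParallelFamily.one))
        (fun j => Arrow.mk (WalkingParallelFamily.Hom.line j))))
  rintro ⟨l, r, h⟩
  change WalkingParallelFamily.Hom J l r at h
  cases h with
  | id =>
    cases l with
    | zero => exact ⟨none, rfl⟩
    | one => exact ⟨some none, rfl⟩
  | line j => exact ⟨some (some j), rfl⟩

variable {κ : Cardinal.{u}} {K : Type u} [SmallCategory K]

lemma upperBound (hK : IsCardFiltered κ K) {J : Type u} (hJ : Cardinal.mk J < κ)
    (k : J → K) : ∃ m : K, ∀ j, Nonempty (k j ⟶ m) := by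
  obtain ⟨c⟩ := hK (Discrete J) (lt_of_le_of_lt (card_arrow_discrete J) hJ) (Discrete.functor k)
  exact ⟨c.pt, fun j => ⟨c.ι.app ⟨j⟩⟩⟩

lemma coeqFamily (hκ : Cardinal.aleph0 ≤ κ) (hK : IsCardFiltered κ K) {J : Type u}
    (hJ : Cardinal.mk J < κ) {a b : K} (f : J → (a ⟶ b)) :
    ∃ (m : K) (t : b ⟶ m), ∀ j j', f j ≫ t = f j' ≫ t := by
  have hcard : Cardinal.mk (Arrow (WalkingParallelFamily J)) < κ := by
    refine lt_of_le_of_lt (card_arrow_wpf J) ?_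
    simp only [Cardinal.mk_option]
    exact Cardinal.add_lt_of_lt hκ (Cardinal.add_lt_of_lt hκ hJ (lt_of_lt_of_le Cardinal.one_lt_aleph0 hκ))
      (lt_of_lt_of_le Cardinal.one_lt_aleph0 hκ)
  obtain ⟨c⟩ := hK _ hcard (parallelFamily f)
  refine ⟨c.pt, c.ι.app .one, fun j j' => ?_⟩
  have h1 := c.ι.naturality (WalkingParallelFamily.Hom.line j)
  have h2 := c.ι.naturality (WalkingParallelFamily.Hom.line j')
  simp only [parallelFamily_map_left, Functor.const_obj_map, Category.comp_id] at h1 h2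
  exact h1.trans h2.symm

lemma factorFamily (hκ : Cardinal.aleph0 ≤ κ) (hK : IsCardFiltered κ K) {J : Type u}
    (hJ : Cardinal.mk J < κ) {k₀ : K} {l : J → K} (u : ∀ j, k₀ ⟶ l j) :
    ∃ (m : K) (v : k₀ ⟶ m) (w : ∀ j, l j ⟶ m), ∀ j, u j ≫ w j = v := by
  have hJ' : Cardinal.mk (Option J) < κ := by
    rw [Cardinal.mk_option]
    exact Cardinal.add_lt_of_lt hκ hJ (lt_of_lt_of_le Cardinal.one_lt_aleph0 hκ)
  obtain ⟨p, hp⟩ := upperBound hK hJ' (fun o : Option J => o.elim k₀ l)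
  have s : ∀ o : Option J, (o.elim k₀ l ⟶ p) := fun o => (hp o).some
  obtain ⟨m, t, ht⟩ := coeqFamily hκ hK hJ'
    (fun o : Option J => o.elim (s none) (fun j => u j ≫ s (some j)))
  refine ⟨m, s none ≫ t, fun j => s (some j) ≫ t, fun j => ?_⟩
  have := ht (some j) none
  exact (Category.assoc (u j) (s (some j)) t).symm.trans this

lemma isFilteredOrEmpty (hκ : Cardinal.aleph0 ≤ κ) (hK : IsCardFiltered κ K) :
    IsFilteredOrEmpty K := by
  have h2 : Cardinal.mk (ULift.{u} Bool) < κ := by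
    refine lt_of_lt_of_le ?_ hκ
    simp [Cardinal.mk_fintype]
  constructor
  · intro X Y
    obtain ⟨m, hm⟩ := upperBound hK h2 (fun b : ULift Bool => if b.down then X else Y)
    exact ⟨m, (hm ⟨true⟩).some, (hm ⟨false⟩).some, trivial⟩
  · intro X Y f g
    obtain ⟨m, t, ht⟩ := coeqFamily hκ hK h2 (fun b : ULift Bool => if b.down then f else g)
    exact ⟨m, t, by simpa using ht ⟨true⟩ ⟨false⟩⟩

lemma exists_map_eq [IsFilteredOrEmpty K] (H : K ⥤ Type u) {t : Cocone H}
    (ht : IsColimit t) {k : K} {x y : H.obj k} (h : t.ι.app k x = t.ι.app k y) :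
    ∃ (l : K) (u : k ⟶ l), H.map u x = H.map u y := by
  obtain ⟨l, p, q, hpq⟩ := (Types.FilteredColimit.isColimit_eq_iff H ht).mp h
  obtain ⟨m, r, hr⟩ := IsFilteredOrEmpty.cocone_maps p q
  refine ⟨m, p ≫ r, ?_⟩
  calc H.map (p ≫ r) x = H.map r (H.map p x) := by simp [FunctorToTypes.map_comp_apply]
    _ = H.map r (H.map q y) := by rw [hpq]
    _ = H.map (q ≫ r) y := by simp [FunctorToTypes.map_comp_apply]
    _ = H.map (p ≫ r) y := by rw [hr]


/-- Index type for the naturality conditions of a presheaf morphism. -/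
structure Cond {C : Type u} [SmallCategory C] (F : Cᵒᵖ ⥤ Type u) : Type u where
  a : Cᵒᵖ
  b : Cᵒᵖ
  ψ : a ⟶ b
  x : F.obj a


end Stmt14Aux

open Stmt14Aux in
theorem stmt14 {C : Type u} [SmallCategory C] (F : Cᵒᵖ ⥤ Type u) :
    ∃ κ : Cardinal.{u}, κ.IsRegular ∧ IsCardPresentable κ F := by
  classical
  set E : Type u := Σ a : Cᵒᵖ, F.obj a with hEdef
  set μ : Cardinal.{u} := Cardinal.mk E + Cardinal.mk (Cond F) + Cardinal.aleph0 with hμdef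
  have hμ : Cardinal.aleph0 ≤ μ := le_add_self
  refine ⟨Order.succ μ, Cardinal.isRegular_succ hμ, ?_⟩
  have hκ : Cardinal.aleph0 ≤ Order.succ μ := hμ.trans (Order.le_succ μ)
  have hE : Cardinal.mk E < Order.succ μ :=
    Order.lt_succ_of_le ((self_le_add_right _ _).trans (self_le_add_right _ _))
  have hT : Cardinal.mk (Cond F) < Order.succ μ :=
    Order.lt_succ_of_le ((self_le_add_left _ _).trans (self_le_add_right _ _))
  intro K _ hK
  haveI : IsFilteredOrEmpty K := isFilteredOrEmpty hκ hK
  constructor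
  intro G
  apply preservesColimit_of_preserves_colimit_cocone (colimit.isColimit G)
  -- colimits evaluated objectwise
  have hca : ∀ a : Cᵒᵖ, IsColimit (((evaluation Cᵒᵖ (Type u)).obj a).mapCocone (colimit.cocone G)) :=
    fun a => isColimitOfPreserves _ (colimit.isColimit G)
  apply Types.FilteredColimit.isColimitOf
  · -- joint surjectivity
    intro f
    show ∃ (i : K) (g : F ⟶ G.obj i), f = g ≫ colimit.ι G i
    have hsur : ∀ e : E, ∃ (k : K) (y : (G.obj k).obj e.1),
        (colimit.ι G k).app e.1 y = f.app e.1 e.2 := by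
      intro e
      obtain ⟨k, y, hy⟩ := Types.jointly_surjective _ (hca e.1) (f.app e.1 e.2)
      exact ⟨k, y, hy⟩
    choose k₀ y hy using hsur
    obtain ⟨k₁, hk₁⟩ := upperBound hK hE k₀
    have t : ∀ e : E, k₀ e ⟶ k₁ := fun e => (hk₁ e).some
    set z : ∀ e : E, (G.obj k₁).obj e.1 := fun e => (G.map (t e)).app e.1 (y e) with hzdef
    have hz : ∀ e : E, (colimit.ι G k₁).app e.1 (z e) = f.app e.1 e.2 := by
      intro e
      have hw := colimit.w G (t e)
      calc (colimit.ι G k₁).app e.1 ((G.map (t e)).app e.1 (y e))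
          = (G.map (t e) ≫ colimit.ι G k₁).app e.1 (y e) := rfl
        _ = (colimit.ι G (k₀ e)).app e.1 (y e) := by rw [hw]
        _ = f.app e.1 e.2 := hy e
    have hcond : ∀ τ : Cond F, ∃ (l : K) (uτ : k₁ ⟶ l),
        (G.map uτ).app τ.b ((G.obj k₁).map τ.ψ (z ⟨τ.a, τ.x⟩)) =
        (G.map uτ).app τ.b (z ⟨τ.b, F.map τ.ψ τ.x⟩) := by
      rintro ⟨a, b, ψ, x⟩
      have h1 : (colimit.ι G k₁).app b ((G.obj k₁).map ψ (z ⟨a, x⟩)) =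
          (colimit.ι G k₁).app b (z ⟨b, F.map ψ x⟩) := by
        have hnat := types_congr_hom ((colimit.ι G k₁).naturality ψ) (z ⟨a, x⟩)
        dsimp at hnat
        calc (colimit.ι G k₁).app b ((G.obj k₁).map ψ (z ⟨a, x⟩))
            = (colimit G).map ψ ((colimit.ι G k₁).app a (z ⟨a, x⟩)) := hnat
          _ = (colimit G).map ψ (f.app a x) := by rw [hz ⟨a, x⟩]
          _ = f.app b (F.map ψ x) := (types_congr_hom (f.naturality ψ) x).symm
          _ = (colimit.ι G k₁).app b (z ⟨b, F.map ψ x⟩) := (hz ⟨b, F.map ψ x⟩).symm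
      exact exists_map_eq (G ⋙ (evaluation Cᵒᵖ (Type u)).obj b) (hca b) h1
    choose l uτ hu using hcond
    obtain ⟨m, vv, w, hw⟩ := factorFamily hκ hK hT uτ
    refine ⟨m, ⟨fun a => TypeCat.ofHom (fun x => (G.map vv).app a (z ⟨a, x⟩)), ?_⟩, ?_⟩
    · intro a b ψ
      ext x
      set τ : Cond F := ⟨a, b, ψ, x⟩ with hτ
      show (G.map vv).app b (z ⟨b, F.map ψ x⟩) = (G.obj m).map ψ ((G.map vv).app a (z ⟨a, x⟩))
      have hnatv := types_congr_hom ((G.map vv).naturality ψ) (z ⟨a, x⟩)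
      dsimp at hnatv
      rw [← hnatv, ← hw τ]
      calc (G.map (uτ τ ≫ w τ)).app b (z ⟨b, F.map ψ x⟩)
          = (G.map (w τ)).app b ((G.map (uτ τ)).app b (z ⟨b, F.map ψ x⟩)) := by
            rw [G.map_comp]; rfl
        _ = (G.map (w τ)).app b ((G.map (uτ τ)).app b ((G.obj k₁).map ψ (z ⟨a, x⟩))) := by
            rw [hu τ]
        _ = (G.map (uτ τ ≫ w τ)).app b ((G.obj k₁).map ψ (z ⟨a, x⟩)) := by
            rw [G.map_comp]; rfl
    · apply NatTrans.ext
      funext a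
      ext x
      show f.app a x = (colimit.ι G m).app a ((G.map vv).app a (z ⟨a, x⟩))
      have hwv := colimit.w G vv
      calc f.app a x = (colimit.ι G k₁).app a (z ⟨a, x⟩) := (hz ⟨a, x⟩).symm
        _ = (G.map vv ≫ colimit.ι G m).app a (z ⟨a, x⟩) := by rw [hwv]
        _ = (colimit.ι G m).app a ((G.map vv).app a (z ⟨a, x⟩)) := rfl
  · -- joint injectivity
    intro i j gi gj hij
    replace hij : gi ≫ colimit.ι G i = gj ≫ colimit.ι G j := hij
    obtain ⟨k, pi, pj, -⟩ := IsFilteredOrEmpty.cocone_objs i j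
    have hk : gi ≫ G.map pi ≫ colimit.ι G k = gj ≫ G.map pj ≫ colimit.ι G k := by
      rw [colimit.w, colimit.w]; exact hij
    have he : ∀ e : E, ∃ (l : K) (u : k ⟶ l),
        (G.map u).app e.1 ((gi ≫ G.map pi).app e.1 e.2) =
        (G.map u).app e.1 ((gj ≫ G.map pj).app e.1 e.2) := by
      intro e
      have h1 : (colimit.ι G k).app e.1 ((gi ≫ G.map pi).app e.1 e.2) =
          (colimit.ι G k).app e.1 ((gj ≫ G.map pj).app e.1 e.2) := by
        exact types_congr_hom (congr_app hk e.1) e.2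
      exact exists_map_eq (G ⋙ (evaluation Cᵒᵖ (Type u)).obj e.1) (hca e.1) h1
    choose l u hu using he
    obtain ⟨m, vv, w, hw⟩ := factorFamily hκ hK hE u
    refine ⟨m, pi ≫ vv, pj ≫ vv, ?_⟩
    show gi ≫ G.map (pi ≫ vv) = gj ≫ G.map (pj ≫ vv)
    apply NatTrans.ext
    funext a
    ext x
    show (G.map (pi ≫ vv)).app a (gi.app a x) = (G.map (pj ≫ vv)).app a (gj.app a x)
    set e : E := ⟨a, x⟩ with hedef
    rw [← hw e, G.map_comp, G.map_comp, G.map_comp, G.map_comp]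
    show (G.map (w e)).app a ((G.map (u e)).app a ((G.map pi).app a (gi.app a x))) =
      (G.map (w e)).app a ((G.map (u e)).app a ((G.map pj).app a (gj.app a x)))
    exact congrArg ((G.map (w e)).app a) (hu e)


end
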